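/- Let X be a quasicontinuous space. Then ((x_i), x) ∈ S*_X if and only if the net (x_i) converges topologically to x. In particular, S*_X-convergence is topological. -/

import Mathlib

namespace Conv

variable {X : Type}

/-- A directed preorder (index of a net), given as an explicit relation. -/
def DirIdx {I : Type} (r : I → I → Prop) : Prop :=
  Nonempty I ∧ (∀ i, r i i) ∧ (∀ a b c : I, r a b → r b c → r a c) ∧
    ∀ a b : I, ∃ c, r a c ∧ r b c

/-- Specialization order relative to a family `T` of "open" sets. -/
def sle (T : Set (Set X)) (x y : X) : Prop := ∀ U ∈ T, x ∈ U → y ∈ U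

/-- Upper closure of a set w.r.t. the specialization order of `T`. -/
def upset (T : Set (Set X)) (A : Set X) : Set X := {z | ∃ a ∈ A, sle T a z}

/-- `D` is a (nonempty) directed subset w.r.t. the specialization order of `T`. -/
def IsDirSet (T : Set (Set X)) (D : Set X) : Prop := D.Nonempty ∧ DirectedOn (sle T) D

/-- A subset `D` (viewed as a monotone net) converges to `x` w.r.t. `T`. -/
def DConv (T : Set (Set X)) (D : Set X) (x : X) : Prop :=
  ∀ U ∈ T, x ∈ U → (D ∩ U).Nonempty

/-- `U` is directed-open w.r.t. `T`. -/
def DirOpen (T : Set (Set X)) (U : Set X) : Prop :=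
  ∀ D x, IsDirSet T D → DConv T D x → x ∈ U → (D ∩ U).Nonempty

/-- The family of directed-open sets. -/
def DTop (T : Set (Set X)) : Set (Set X) := {U | DirOpen T U}

/-- The family of open sets of a topological space. -/
def opens (X : Type) [TopologicalSpace X] : Set (Set X) := {U | IsOpen U}

/-- Every directed-open set belongs to `T`. -/
def DirT (T : Set (Set X)) : Prop := ∀ U, DirOpen T U → U ∈ T

/-- A directed space: every directed-open set is open. -/
def IsDirectedSpace (X : Type) [TopologicalSpace X] : Prop := DirT (opens X)

/-- A net is eventually in `U`. -/
def EvIn {I : Type} (r : I → I → Prop) (xi : I → X) (U : Set X) : Prop :=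
  ∃ k, ∀ i, r k i → xi i ∈ U

/-- `y` is an eventual lower bound of the net `xi`. -/
def EvLB (T : Set (Set X)) {I : Type} (r : I → I → Prop) (xi : I → X) (y : X) : Prop :=
  ∃ k, ∀ i, r k i → sle T y (xi i)

/-- Topological convergence of a net w.r.t. the family `T` of open sets. -/
def NConv (T : Set (Set X)) {I : Type} (r : I → I → Prop) (xi : I → X) (x : X) : Prop :=
  ∀ U ∈ T, x ∈ U → EvIn r xi U

/-- `((x_i), x) ∈ S_X`: some directed set of eventual lower bounds converges to `x`. -/
def SConv (T : Set (Set X)) {I : Type} (r : I → I → Prop) (xi : I → X) (x : X) : Prop :=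
  ∃ D : Set X, IsDirSet T D ∧ (∀ d ∈ D, EvLB T r xi d) ∧ DConv T D x

/-- `U` is open in the topology determined by `S_X`. -/
def SOpen (T : Set (Set X)) (U : Set X) : Prop :=
  ∀ (I : Type) (r : I → I → Prop), DirIdx r → ∀ (xi : I → X) (x : X),
    SConv T r xi x → x ∈ U → EvIn r xi U

/-- `y ≪_d x`. -/
def WayBelow (T : Set (Set X)) (y x : X) : Prop :=
  ∀ D : Set X, IsDirSet T D → DConv T D x → ∃ d ∈ D, sle T y d

/-- A continuous space (relative to the family `T`). -/
def IsContinuousT (T : Set (Set X)) : Prop :=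
  DirT T ∧ ∀ x : X, IsDirSet T {y | WayBelow T y x} ∧ DConv T {y | WayBelow T y x} x

def IsContinuousSpace (X : Type) [TopologicalSpace X] : Prop := IsContinuousT (opens X)

/-- `G ≪_d H` for subsets. -/
def SWayBelow (T : Set (Set X)) (G H : Set X) : Prop :=
  ∀ (D : Set X) (x : X), IsDirSet T D → DConv T D x → x ∈ H → (D ∩ upset T G).Nonempty

/-- A directed family of finite sets (ordered by reverse inclusion of upper closures). -/
def IsDirFam (T : Set (Set X)) (F : Set (Set X)) : Prop :=
  F.Nonempty ∧ (∀ A ∈ F, A.Finite) ∧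
    ∀ A ∈ F, ∀ B ∈ F, ∃ C ∈ F, upset T C ⊆ upset T A ∧ upset T C ⊆ upset T B

/-- Convergence of a family of finite sets to `x`. -/
def FamConv (T : Set (Set X)) (F : Set (Set X)) (x : X) : Prop :=
  ∀ U ∈ T, x ∈ U → ∃ A ∈ F, upset T A ⊆ U

/-- `fin_d(x)`. -/
def finD (T : Set (Set X)) (x : X) : Set (Set X) := {A | A.Finite ∧ SWayBelow T A {x}}

def IsQuasicontinuousT (T : Set (Set X)) : Prop :=
  DirT T ∧ ∀ x : X, IsDirFam T (finD T x) ∧ FamConv T (finD T x) x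

def IsQuasicontinuousSpace (X : Type) [TopologicalSpace X] : Prop :=
  IsQuasicontinuousT (opens X)

/-- `A` is a quasi eventual lower bound of the net `xi`. -/
def QEvLB (T : Set (Set X)) {I : Type} (r : I → I → Prop) (xi : I → X) (A : Set X) : Prop :=
  A.Finite ∧ ∃ k, ∀ i, r k i → xi i ∈ upset T A

/-- `((x_i), x) ∈ S*_X`. -/
def QSConv (T : Set (Set X)) {I : Type} (r : I → I → Prop) (xi : I → X) (x : X) : Prop :=
  ∃ F : Set (Set X), IsDirFam T F ∧ (∀ A ∈ F, QEvLB T r xi A) ∧ FamConv T F x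

/-- `U` is open in the topology determined by `S*_X`. -/
def QSOpen (T : Set (Set X)) (U : Set X) : Prop :=
  ∀ (I : Type) (r : I → I → Prop), DirIdx r → ∀ (xi : I → X) (x : X),
    QSConv T r xi x → x ∈ U → EvIn r xi U

/-- `x ≡ liminf x_i`. -/
def IsLiminf (T : Set (Set X)) {I : Type} (r : I → I → Prop) (xi : I → X) (x : X) : Prop :=
  (∀ y, EvLB T r xi y → sle T y x) ∧
  (∀ z, (∀ y, EvLB T r xi y → sle T y z) → sle T x z) ∧
  SConv T r xi x

/-- `f : (J,s) → (I,r)` is a subnet map: monotone and cofinal, with directed domain. -/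
def Subnet {I J : Type} (r : I → I → Prop) (s : J → J → Prop) (f : J → I) : Prop :=
  DirIdx s ∧ (∀ a b, s a b → r (f a) (f b)) ∧ ∀ i, ∃ j, r i (f j)

/-- `z` is a cofinal lower bound of the net `xi`. -/
def CofLB (T : Set (Set X)) {I : Type} (r : I → I → Prop) (xi : I → X) (z : X) : Prop :=
  ∀ i, ∃ j, r i j ∧ sle T z (xi j)

/-- `((x_i), x) ∈ L_X`: every subnet has liminf `x`. -/
def LConv (T : Set (Set X)) {I : Type} (r : I → I → Prop) (xi : I → X) (x : X) : Prop :=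
  ∀ (J : Type) (s : J → J → Prop) (f : J → I), Subnet r s f →
    IsLiminf T s (fun j => xi (f j)) x

/-- `U` is open in the liminf topology `L(X)`. -/
def LOpen (T : Set (Set X)) (U : Set X) : Prop :=
  ∀ (I : Type) (r : I → I → Prop), DirIdx r → ∀ (xi : I → X) (x : X),
    LConv T r xi x → x ∈ U → EvIn r xi U

/-- `x ≡_q liminf x_i`. -/
def QLiminf (T : Set (Set X)) {I : Type} (r : I → I → Prop) (xi : I → X) (x : X) : Prop :=
  QSConv T r xi x ∧ ∀ y, EvLB T r xi y → sle T y x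

/-- `((x_i), x) ∈ L*_X`: every subnet quasi-liminf converges to `x`. -/
def QLConv (T : Set (Set X)) {I : Type} (r : I → I → Prop) (xi : I → X) (x : X) : Prop :=
  ∀ (J : Type) (s : J → J → Prop) (f : J → I), Subnet r s f →
    QLiminf T s (fun j => xi (f j)) x

/-- `U` is open in the quasi-liminf topology `L*(X)`. -/
def QLOpen (T : Set (Set X)) (U : Set X) : Prop :=
  ∀ (I : Type) (r : I → I → Prop), DirIdx r → ∀ (xi : I → X) (x : X),
    QLConv T r xi x → x ∈ U → EvIn r xi U

/-- The Lawson topology: generated by the opens of `X` and complements of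
principal upper sets. -/
def lawson (X : Type) [TopologicalSpace X] : Set (Set X) :=
  {U | (TopologicalSpace.generateFrom
      (opens X ∪ {V | ∃ y : X, V = {z : X | sle (opens X) y z}ᶜ})).IsOpen U}


section Aux

lemma sle_refl (T : Set (Set X)) (x : X) : sle T x x := fun _ _ h => h

lemma sle_trans {T : Set (Set X)} {x y z : X} (h1 : sle T x y) (h2 : sle T y z) :
    sle T x z := fun U hU hx => h2 U hU (h1 U hU hx)

lemma mem_upset_self {T : Set (Set X)} {A : Set X} {a : X} (ha : a ∈ A) :
    a ∈ upset T A := ⟨a, ha, sle_refl T a⟩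

lemma upset_mem_trans {T : Set (Set X)} {A : Set X} {y z : X}
    (hy : y ∈ upset T A) (h : sle T y z) : z ∈ upset T A := by
  obtain ⟨a, ha, hay⟩ := hy
  exact ⟨a, ha, sle_trans hay h⟩

lemma singleton_dirset (T : Set (Set X)) (z : X) : IsDirSet T {z} := by
  refine ⟨⟨z, rfl⟩, ?_⟩
  intro a ha b hb
  have ha' : a = z := ha
  have hb' : b = z := hb
  refine ⟨z, rfl, ?_, ?_⟩
  · rw [ha']; exact sle_refl T z
  · rw [hb']; exact sle_refl T z

lemma swb_mem_upset {T : Set (Set X)} {A : Set X} {z : X}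
    (h : SWayBelow T A {z}) : z ∈ upset T A := by
  obtain ⟨d, hd, hdA⟩ :=
    h {z} z (singleton_dirset T z) (fun U _ hz => ⟨z, rfl, hz⟩) rfl
  rw [Set.mem_singleton_iff] at hd
  subst hd
  exact hdA

lemma swb_sle {T : Set (Set X)} {G : Set X} {d1 d : X}
    (h : SWayBelow T G {d1}) (hle : sle T d1 d) : SWayBelow T G {d} := by
  intro D y hD hconv hy
  rw [Set.mem_singleton_iff] at hy
  subst hy
  exact h D d1 hD (fun U hU h1 => hconv U hU (hle U hU h1)) rfl

/-- Key lemma: in a quasicontinuous space, `⇑A = {z | A ≪_d z}` is directed-open. -/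
lemma wb_dirOpen {T : Set (Set X)} (hq : IsQuasicontinuousT T) (A : Set X) :
    DirOpen T {z | SWayBelow T A {z}} := by
  intro D z hD hconv hz
  by_contra hne
  rw [Set.not_nonempty_iff_eq_empty] at hne
  have hnwb : ∀ d ∈ D, ¬ SWayBelow T A {d} := by
    intro d hd hwb
    have hmem : d ∈ D ∩ {z | SWayBelow T A {z}} := ⟨hd, hwb⟩
    rw [hne] at hmem
    exact hmem
  -- choose directed witnesses avoiding `↑A`
  have hwit : ∀ d ∈ D, ∃ E : Set X, IsDirSet T E ∧ DConv T E d ∧ E ∩ upset T A = ∅ := by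
    intro d hd
    by_contra hcon
    push_neg at hcon
    refine hnwb d hd ?_
    intro E y hE hEc hy
    rw [Set.mem_singleton_iff] at hy
    subst hy
    exact hcon E hE hEc
  choose E hE1 hE2 hE3 using hwit
  -- the directed family of finite sets way below members of D
  set S : Set (Set X) := {G | ∃ d, ∃ _ : d ∈ D, G ∈ finD T d} with hSdef
  have hGprop : ∀ (d : X) (hd : d ∈ D) (G : Set X), G ∈ finD T d →
      ∃ g ∈ G, g ∉ upset T A := by
    intro d hd G hG
    obtain ⟨e, heE, heG⟩ := hG.2 (E d hd) d (hE1 d hd) (hE2 d hd) rfl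
    have heA : e ∉ upset T A := by
      intro h
      have hmem : e ∈ E d hd ∩ upset T A := ⟨heE, h⟩
      rw [hE3 d hd] at hmem
      exact hmem
    obtain ⟨g, hgG, hge⟩ := heG
    exact ⟨g, hgG, fun hgA => heA (upset_mem_trans hgA hge)⟩
  have hSfin : ∀ G ∈ S, G.Finite := by
    rintro G ⟨d, hd, hG⟩
    exact hG.1
  have hSmeet : ∀ G ∈ S, ∃ g ∈ G, g ∉ upset T A := by
    rintro G ⟨d, hd, hG⟩
    exact hGprop d hd G hG
  have hSdir : ∀ G1 ∈ S, ∀ G2 ∈ S,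
      ∃ G3 ∈ S, upset T G3 ⊆ upset T G1 ∧ upset T G3 ⊆ upset T G2 := by
    rintro G1 ⟨d1, hd1, hG1⟩ G2 ⟨d2, hd2, hG2⟩
    obtain ⟨d, hd, hle1, hle2⟩ := hD.2 d1 hd1 d2 hd2
    have hG1' : G1 ∈ finD T d := ⟨hG1.1, swb_sle hG1.2 hle1⟩
    have hG2' : G2 ∈ finD T d := ⟨hG2.1, swb_sle hG2.2 hle2⟩
    obtain ⟨G3, hG3, hi1, hi2⟩ := (hq.2 d).1.2.2 G1 hG1' G2 hG2'
    exact ⟨G3, ⟨d, hd, hG3⟩, hi1, hi2⟩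
  have hSconv : ∀ U ∈ T, z ∈ U → ∃ G ∈ S, upset T G ⊆ U := by
    intro U hU hz'
    obtain ⟨d, hdD, hdU⟩ := hconv U hU hz'
    obtain ⟨G, hG, hGU⟩ := (hq.2 d).2 U hU hdU
    exact ⟨G, ⟨d, hdD, hG⟩, hGU⟩
  have hSne : S.Nonempty := by
    obtain ⟨d, hd⟩ := hD.1
    obtain ⟨G, hG⟩ := (hq.2 d).1.1
    exact ⟨G, d, hd, hG⟩
  -- Rudin-style Zorn argument: minimal lower set inside `(↑A)ᶜ` meeting every `G ∈ S`
  set 𝓒 : Set (Set X) :=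
    {C | C ⊆ (upset T A)ᶜ ∧ (∀ c ∈ C, ∀ y, sle T y c → y ∈ C) ∧
      ∀ G ∈ S, (C ∩ G).Nonempty} with h𝓒def
  have hC0 : (upset T A)ᶜ ∈ 𝓒 := by
    refine ⟨subset_rfl, ?_, ?_⟩
    · intro c hc y hy hyA
      exact hc (upset_mem_trans hyA hy)
    · intro G hG
      obtain ⟨g, hgG, hgA⟩ := hSmeet G hG
      exact ⟨g, hgA, hgG⟩
  have hzorn : ∀ c ⊆ 𝓒, IsChain (· ⊆ ·) c → c.Nonempty →
      ∃ lb ∈ 𝓒, ∀ s ∈ c, lb ⊆ s := by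
    intro c hc hchain hcne
    refine ⟨⋂₀ c, ⟨?_, ?_, ?_⟩, fun s hs => Set.sInter_subset_of_mem hs⟩
    · obtain ⟨C1, hC1⟩ := hcne
      exact (Set.sInter_subset_of_mem hC1).trans (hc hC1).1
    · intro a ha y hy
      exact Set.mem_sInter.2 fun C hCc =>
        (hc hCc).2.1 a (Set.mem_sInter.1 ha C hCc) y hy
    · intro G hG
      have hGfin := hSfin G hG
      have h𝒢fin : ((fun C => G ∩ C) '' c).Finite :=
        Set.Finite.subset hGfin.finite_subsets
          (by rintro t ⟨C, hC, rfl⟩; exact Set.inter_subset_left)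
      have h𝒢ne : ((fun C => G ∩ C) '' c).Nonempty := hcne.image _
      obtain ⟨m, hm, hmmin⟩ :=
        Set.Finite.exists_minimalFor id ((fun C => G ∩ C) '' c) h𝒢fin h𝒢ne
      have h𝒢chain : IsChain (· ⊆ ·) ((fun C => G ∩ C) '' c) :=
        hchain.image_of_map_rel _ _ _ (fun s t hst => Set.inter_subset_inter_right G hst)
      have hleast : ∀ t ∈ (fun C => G ∩ C) '' c, m ⊆ t := by
        intro t ht
        rcases eq_or_ne m t with rfl | hne'
        · exact subset_rfl
        · rcases h𝒢chain hm ht hne' with h | h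
          · exact h
          · exact hmmin ht h
      obtain ⟨Cm, hCm, hmeq⟩ := hm
      have hmne : m.Nonempty := by
        obtain ⟨g, hg1, hg2⟩ := (hc hCm).2.2 G hG
        exact ⟨g, hmeq ▸ (⟨hg2, hg1⟩ : g ∈ G ∩ Cm)⟩
      obtain ⟨g, hg⟩ := hmne
      refine ⟨g, Set.mem_sInter.2 ?_, ?_⟩
      · intro C hCc
        exact (hleast _ ⟨C, hCc, rfl⟩ hg).2
      · exact (hleast _ ⟨Cm, hCm, rfl⟩ hg).1
  obtain ⟨C, _hCsub0, hCminimal⟩ := zorn_superset_nonempty 𝓒 hzorn _ hC0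
  have hCmem : C ∈ 𝓒 := hCminimal.1
  obtain ⟨hCsub, hClower, hCmeet⟩ := hCmem
  have hCmin : ∀ a ∈ 𝓒, a ⊆ C → C ⊆ a := fun a ha hsub => hCminimal.2 ha hsub
  -- minimal element is directed
  have hCdir : DirectedOn (sle T) C := by
    intro x1 hx1 x2 hx2
    by_contra hcon
    push_neg at hcon
    have hrem : ∀ x0 ∈ C, ∃ G1 ∈ S, ∀ g ∈ C ∩ G1, sle T x0 g := by
      intro x0 hx0
      by_contra hcon2
      push_neg at hcon2
      have hmem : (C ∩ {w | sle T x0 w}ᶜ) ∈ 𝓒 := by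
        refine ⟨fun y hy => hCsub hy.1, ?_, ?_⟩
        · intro a ha y hy
          exact ⟨hClower a ha.1 y hy, fun hxy => ha.2 (sle_trans hxy hy)⟩
        · intro G hG
          obtain ⟨g, hgCG, hgx⟩ := hcon2 G hG
          exact ⟨g, ⟨hgCG.1, hgx⟩, hgCG.2⟩
      have hsub2 := hCmin _ hmem (fun y hy => hy.1)
      exact (hsub2 hx0).2 (sle_refl T x0)
    obtain ⟨G1, hG1S, hG1⟩ := hrem x1 hx1
    obtain ⟨G2, hG2S, hG2⟩ := hrem x2 hx2
    obtain ⟨G3, hG3S, hi1, hi2⟩ := hSdir G1 hG1S G2 hG2S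
    obtain ⟨c3, hc3C, hc3G⟩ := hCmeet G3 hG3S
    obtain ⟨g1, hg1, hg1c⟩ := hi1 (mem_upset_self hc3G)
    have hx1c : sle T x1 c3 :=
      sle_trans (hG1 g1 ⟨hClower c3 hc3C g1 hg1c, hg1⟩) hg1c
    obtain ⟨g2, hg2, hg2c⟩ := hi2 (mem_upset_self hc3G)
    have hx2c : sle T x2 c3 :=
      sle_trans (hG2 g2 ⟨hClower c3 hc3C g2 hg2c, hg2⟩) hg2c
    exact hcon c3 hc3C hx1c hx2c
  have hCne : C.Nonempty := by
    obtain ⟨G, hG⟩ := hSne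
    obtain ⟨g, hgC, _⟩ := hCmeet G hG
    exact ⟨g, hgC⟩
  have hCconv : DConv T C z := by
    intro U hU hzU
    obtain ⟨G, hGS, hGU⟩ := hSconv U hU hzU
    obtain ⟨g, hgC, hgG⟩ := hCmeet G hGS
    exact ⟨g, hgC, hGU (mem_upset_self hgG)⟩
  obtain ⟨e, heC, heA⟩ := hz C z ⟨hCne, hCdir⟩ hCconv rfl
  exact hCsub heC heA

end Aux

theorem stmt13 (X : Type) [TopologicalSpace X] [T0Space X]
    (h : IsQuasicontinuousSpace X) :
    ∀ (I : Type) (r : I → I → Prop), DirIdx r → ∀ (xi : I → X) (x : X),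
      QSConv (opens X) r xi x ↔ NConv (opens X) r xi x := by
  intro I r _hr xi x
  constructor
  · rintro ⟨F, _hF, hqe, hfc⟩ U hU hxU
    obtain ⟨A, hA, hAU⟩ := hfc U hU hxU
    obtain ⟨-, k, hk⟩ := hqe A hA
    exact ⟨k, fun i hi => hAU (hk i hi)⟩
  · intro hn
    refine ⟨finD (opens X) x, (h.2 x).1, ?_, (h.2 x).2⟩
    intro A hA
    refine ⟨hA.1, ?_⟩
    have hopen : {z | SWayBelow (opens X) A {z}} ∈ opens X :=
      h.1 _ (wb_dirOpen h A)
    obtain ⟨k, hk⟩ := hn _ hopen hA.2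
    exact ⟨k, fun i hi => swb_mem_upset (hk i hi)⟩


end Conv
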